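/- Let (A, 𝔪) be a local ring with residue field k, and let g, h ∈ A[X] be monic polynomials whose reductions mod 𝔪 are coprime in k[X]. Then there exist u, v ∈ A[X] with u·g + v·h = 1. -/

import Mathlib

open Polynomial

/-- Over a local ring `(A, 𝔪)`, if `g, h` are monic and their reductions mod `𝔪` are coprime
in `(A/𝔪)[X]`, then there exist `u, v` with `u·g + v·h = 1`. -/
theorem bezout_of_residually_coprime {A : Type*} [CommRing A] [IsLocalRing A]
    (g h : Polynomial A) (hg : g.Monic) (hh : h.Monic)
    (hcop : IsCoprime (g.map (Ideal.Quotient.mk (IsLocalRing.maximalIdeal A)))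
      (h.map (Ideal.Quotient.mk (IsLocalRing.maximalIdeal A)))) :
    ∃ u v : Polynomial A, u * g + v * h = 1 := by
  set m := IsLocalRing.maximalIdeal A
  set I : Ideal (Polynomial A) := Ideal.span {g, h} with hI
  suffices h1 : (1 : Polynomial A) ∈ I by
    obtain ⟨a, b, hab⟩ := Ideal.mem_span_pair.mp h1
    exact ⟨a, b, hab⟩
  -- the quotient module
  set Q := Polynomial A ⧸ I
  let π : Polynomial A →ₗ[A] Q := (Ideal.Quotient.mkₐ A I).toLinearMap
  -- step 1: ⊤ ≤ m • ⊤ in Q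
  have hle : (⊤ : Submodule A Q) ≤ m • ⊤ := by
    obtain ⟨a, b, hab⟩ := hcop
    obtain ⟨u, hu⟩ := Polynomial.map_surjective _ Ideal.Quotient.mk_surjective a
    obtain ⟨v, hv⟩ := Polynomial.map_surjective _ Ideal.Quotient.mk_surjective b
    intro x _
    obtain ⟨p, rfl⟩ := Ideal.Quotient.mk_surjective x
    have key : (Ideal.Quotient.mk I) p = π (p * (1 - (u * g + v * h))) := by
      have : (Ideal.Quotient.mk I) (p * (u * g + v * h)) = 0 := by
        rw [Ideal.Quotient.eq_zero_iff_mem]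
        exact Ideal.mul_mem_left _ _ (Ideal.add_mem _
          (Ideal.mul_mem_left _ _ (Ideal.subset_span (by simp)))
          (Ideal.mul_mem_left _ _ (Ideal.subset_span (by simp))))
      simp only [π, Ideal.Quotient.mkₐ_eq_mk, AlgHom.toLinearMap_apply, mul_sub, mul_one,
        map_sub, this, sub_zero]
    rw [key]
    have hcoef : ∀ n, ((1 - (u * g + v * h)) : Polynomial A).coeff n ∈ m := by
      intro n
      have : ((1 - (u * g + v * h)) : Polynomial A).map (Ideal.Quotient.mk m) = 0 := by
        simp [Polynomial.map_sub, Polynomial.map_add, Polynomial.map_mul, hu, hv, hab]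
      have h2 : Ideal.Quotient.mk m (((1 - (u * g + v * h)) : Polynomial A).coeff n) = 0 := by
        rw [← Polynomial.coeff_map, this, Polynomial.coeff_zero]
      exact Ideal.Quotient.eq_zero_iff_mem.mp h2
    have hmem : (p * (1 - (u * g + v * h))) ∈ (m • ⊤ : Submodule A (Polynomial A)) := by
      have hc : ∀ n, (p * (1 - (u * g + v * h))).coeff n ∈ m := by
        have : (1 - (u * g + v * h)) ∈ Ideal.map (Polynomial.C : A →+* Polynomial A) m :=
          Ideal.mem_map_C_iff.mpr hcoef
        have : p * (1 - (u * g + v * h)) ∈ Ideal.map (Polynomial.C : A →+* Polynomial A) m :=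
          Ideal.mul_mem_left _ _ this
        exact fun n => Ideal.mem_map_C_iff.mp this n
      set q := p * (1 - (u * g + v * h))
      rw [← Polynomial.sum_C_mul_X_pow_eq q]
      refine Submodule.sum_mem _ fun n _ => ?_
      show Polynomial.C (q.coeff n) * X ^ n ∈ _
      rw [← Polynomial.smul_eq_C_mul]
      exact Submodule.smul_mem_smul (hc n) trivial
    have : π (p * (1 - (u * g + v * h))) ∈ Submodule.map π (m • ⊤ : Submodule A (Polynomial A)) :=
      ⟨_, hmem, rfl⟩
    rw [Submodule.map_smul''] at this
    exact (smul_mono_right _ le_top : m • _ ≤ m • (⊤ : Submodule A Q)) this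
  -- step 2: FG
  have hfg : (⊤ : Submodule A Q).FG := by
    classical
    refine ⟨(Finset.range (g.natDegree + 1)).image (fun i => π (X ^ i)), ?_⟩
    rw [eq_top_iff]
    rintro x -
    obtain ⟨p, rfl⟩ := Ideal.Quotient.mk_surjective x
    have hdiv : (Ideal.Quotient.mk I) p = π (p %ₘ g) := by
      conv_lhs => rw [← Polynomial.modByMonic_add_div p g]
      simp only [π, Ideal.Quotient.mkₐ_eq_mk, AlgHom.toLinearMap_apply, map_add, map_mul]
      have : (Ideal.Quotient.mk I) g = 0 := by
        rw [Ideal.Quotient.eq_zero_iff_mem]; exact Ideal.subset_span (by simp)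
      rw [this, zero_mul, add_zero]
    have hdeg : (p %ₘ g).natDegree < g.natDegree + 1 :=
      lt_of_le_of_lt (Polynomial.natDegree_modByMonic_le p hg) (Nat.lt_succ_self _)
    rw [Polynomial.as_sum_range' _ _ hdeg] at hdiv
    rw [hdiv, map_sum]
    refine Submodule.sum_mem _ fun n hn => ?_
    rw [← Polynomial.smul_X_eq_monomial, map_smul]
    exact Submodule.smul_mem _ _ (Submodule.subset_span
      (Finset.mem_image.mpr ⟨n, Finset.mem_range.mpr (Finset.mem_range.mp hn), rfl⟩))
  -- Nakayama
  have hjac : m ≤ Ideal.jacobson (⊥ : Ideal A) := IsLocalRing.maximalIdeal_le_jacobson ⊥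
  have := Submodule.eq_bot_of_le_smul_of_le_jacobson_bot m ⊤ hfg hle hjac
  have hsub : Subsingleton Q := by
    constructor
    intro a b
    have : (⊤ : Submodule A Q) = ⊥ := this
    have ha : a ∈ (⊥ : Submodule A Q) := this ▸ Submodule.mem_top
    have hb : b ∈ (⊥ : Submodule A Q) := this ▸ Submodule.mem_top
    rw [Submodule.mem_bot] at ha hb; rw [ha, hb]
  rw [Ideal.Quotient.subsingleton_iff.mp hsub]
  trivial
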